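/- Let L be the splitting field over ℂ(t) of the polynomial X³ + t·X² + 1. Then L/ℂ(t) is a Galois extension and its Galois group Gal(L/ℂ(t)) is isomorphic to the symmetric group 𝔖₃ on three letters. -/

import Mathlib

open Polynomial IntermediateField
open scoped nonZeroDivisors

/-- The cubic `X³ + t·X² + 1` over `ℂ(t)`. -/
noncomputable def cubicS3 : Polynomial (RatFunc ℂ) :=
  Polynomial.X ^ 3 + Polynomial.C RatFunc.X * Polynomial.X ^ 2 + 1

lemma noRootCubic (r : RatFunc ℂ) : r ^ 3 + RatFunc.X * r ^ 2 + 1 ≠ 0 := by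
  intro h
  have hint : IsIntegral ℂ[X] r := by
    refine ⟨X ^ 3 + C X * X ^ 2 + 1, ?_, ?_⟩
    · monicity!
    · simp only [eval₂_add, eval₂_mul, eval₂_pow, eval₂_X, eval₂_C, eval₂_one]
      rwa [RatFunc.algebraMap_X] at *
  obtain ⟨P, hP⟩ := IsIntegrallyClosed.isIntegral_iff.mp hint
  rw [← hP, ← RatFunc.algebraMap_X (K := ℂ)] at h
  have h2 : algebraMap ℂ[X] (RatFunc ℂ) (P ^ 3 + X * P ^ 2 + 1) = 0 := by
    push_cast [map_add, map_mul, map_pow, map_one] at h ⊢; linear_combination h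
  have h3 : P ^ 3 + X * P ^ 2 + 1 = 0 :=
    (map_eq_zero_iff _ (IsFractionRing.injective ℂ[X] (RatFunc ℂ))).mp h2
  have hu : IsUnit P := IsUnit.of_mul_eq_one (a := P) (-(P * (P + X))) (by linear_combination -h3)
  obtain ⟨c, hc, rfl⟩ := Polynomial.isUnit_iff.mp hu
  have hc2 : c ^ 2 = 0 := by
    have := congrArg (fun p => coeff p 1) h3
    simp only [coeff_add, coeff_zero, coeff_one, ← C_pow, coeff_X_mul, coeff_C] at this
    simpa using this
  have hc0 : c = 0 := by
    exact pow_eq_zero_iff (n := 2) (by norm_num) |>.mp hc2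
  simp [hc0] at hc
lemma noRootQuad (s : RatFunc ℂ) : s ^ 2 ≠ s + RatFunc.X ^ 3 := by
  intro h
  have hint : IsIntegral ℂ[X] s := by
    refine ⟨X ^ 2 - X - C (X ^ 3), ?_, ?_⟩
    · monicity!
    · simp only [eval₂_sub, eval₂_pow, eval₂_X, eval₂_C]
      rw [map_pow, RatFunc.algebraMap_X]
      linear_combination h
  obtain ⟨S, hS⟩ := IsIntegrallyClosed.isIntegral_iff.mp hint
  rw [← hS, ← RatFunc.algebraMap_X (K := ℂ)] at h
  have h2 : algebraMap ℂ[X] (RatFunc ℂ) (S ^ 2 - (S + X ^ 3)) = 0 := by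
    push_cast [map_sub, map_add, map_pow] at h ⊢; linear_combination h
  have h3 : S ^ 2 = S + X ^ 3 := by
    have := (map_eq_zero_iff _ (IsFractionRing.injective ℂ[X] (RatFunc ℂ))).mp h2
    linear_combination this
  set g : ℂ[X] := 2 * S - 1 with hg
  have hgsq : g ^ 2 = 4 * X ^ 3 + 1 := by rw [hg]; linear_combination 4 * h3
  have hg0 : g ≠ 0 := by
    intro h0; rw [h0] at hgsq
    have := congrArg (fun p => coeff p 3) hgsq
    simp [coeff_one] at this
  have hdeg : 2 * g.natDegree = 3 := by
    have := congrArg natDegree hgsq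
    rw [natDegree_pow] at this
    rw [this]
    compute_degree!
  omega

lemma cubicS3_monic : cubicS3.Monic := by unfold cubicS3; monicity!
lemma cubicS3_natDegree : cubicS3.natDegree = 3 := by unfold cubicS3; compute_degree!
instance : CharZero (RatFunc ℂ) :=
  charZero_of_injective_algebraMap (algebraMap ℂ (RatFunc ℂ)).injective
lemma cubicS3_irred : Irreducible cubicS3 := by
  rw [cubicS3_monic.irreducible_iff_roots_eq_zero_of_degree_le_three
    (by rw [cubicS3_natDegree]; norm_num) (by rw [cubicS3_natDegree])]
  rw [Multiset.eq_zero_iff_forall_notMem]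
  intro r hr
  rw [mem_roots cubicS3_monic.ne_zero, IsRoot, cubicS3] at hr
  simp only [eval_add, eval_pow, eval_mul, eval_X, eval_C, eval_one] at hr
  exact noRootCubic r hr
lemma cubicS3_sep : cubicS3.Separable := cubicS3_irred.separable

instance : IsGalois (RatFunc ℂ) cubicS3.SplittingField :=
  IsGalois.of_separable_splitting_field cubicS3_sep

instance : Fact ((cubicS3.map (algebraMap (RatFunc ℂ) cubicS3.SplittingField)).Splits) :=
  ⟨SplittingField.splits _⟩

/-- perm congr as a MulEquiv -/
def permMulEquiv {α β : Type*} (e : α ≃ β) : Equiv.Perm α ≃* Equiv.Perm β :=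
  { Equiv.permCongr e with
    map_mul' := fun σ τ => by
      ext x
      simp [Equiv.permCongr_apply, Equiv.Perm.mul_apply] }

local notation "F" => RatFunc ℂ
local notation "L" => cubicS3.SplittingField

set_option maxHeartbeats 1000000 in
set_option synthInstance.maxHeartbeats 200000 in
/-- The splitting field `L` of `X³ + t·X² + 1` over `ℂ(t)` is a Galois extension with
Galois group isomorphic to the symmetric group `𝔖₃` on three letters. -/
theorem galois_group_of_cubic_is_S3 :
    IsGalois (RatFunc ℂ) cubicS3.SplittingField ∧
    Nonempty ((cubicS3.SplittingField ≃ₐ[RatFunc ℂ] cubicS3.SplittingField) ≃*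
      Equiv.Perm (Fin 3)) := by
  classical
  refine ⟨inferInstance, ?_⟩
  -- a root u
  have hcard3 : Fintype.card (cubicS3.rootSet L) = 3 := by
    rw [card_rootSet_eq_natDegree cubicS3_sep (SplittingField.splits _), cubicS3_natDegree]
  obtain ⟨U⟩ : Nonempty (cubicS3.rootSet L) := by
    rw [← Fintype.card_pos_iff, hcard3]; norm_num
  obtain ⟨V, hVU⟩ := Fintype.exists_ne_of_one_lt_card (by rw [hcard3]; norm_num) U
  obtain ⟨u, humem⟩ := U
  obtain ⟨v, hvmem⟩ := V
  have hvu : v ≠ u := fun h => hVU (by simp [Subtype.ext_iff, h])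
  set t : L := algebraMap F L RatFunc.X with ht
  have hu : aeval u cubicS3 = 0 := (mem_rootSet.mp humem).2
  have hv : aeval v cubicS3 = 0 := (mem_rootSet.mp hvmem).2
  have hu' : u ^ 3 + t * u ^ 2 + 1 = 0 := by
    simpa [cubicS3.eq_def, ht] using hu
  have hv' : v ^ 3 + t * v ^ 2 + 1 = 0 := by
    simpa [cubicS3.eq_def, ht] using hv
  have hu0 : u ≠ 0 := by
    intro h; rw [h] at hu'; simp at hu'
  -- u is transcendental over ℂ
  have htrans : Transcendental ℂ u := by
    intro halg
    have hri : IsIntegral ℂ u := halg.isIntegral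
    have hfd : FiniteDimensional ℂ (IntermediateField.adjoin ℂ {u}) :=
      IntermediateField.adjoin.finiteDimensional hri
    have humem' : u ∈ IntermediateField.adjoin ℂ {u} :=
      IntermediateField.mem_adjoin_simple_self ℂ u
    have htE : t ∈ IntermediateField.adjoin ℂ {u} := by
      have h1 : (-(u ^ 3) - 1) * (u ^ 2)⁻¹ ∈ IntermediateField.adjoin ℂ {u} :=
        mul_mem (sub_mem (neg_mem (pow_mem humem' 3)) (one_mem _))
          (inv_mem (pow_mem humem' 2))
      have h2 : t = (-(u ^ 3) - 1) * (u ^ 2)⁻¹ := by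
        rw [eq_mul_inv_iff_mul_eq₀ (pow_ne_zero 2 hu0)]
        linear_combination hu'
      rwa [h2]
    have hTi : IsIntegral ℂ (⟨t, htE⟩ : IntermediateField.adjoin ℂ {u}) :=
      IsIntegral.of_finite ℂ _
    have hti : IsAlgebraic ℂ t :=
      (hTi.map (IntermediateField.adjoin ℂ {u}).val).isAlgebraic
    rw [ht] at hti
    have h1 : IsAlgebraic ℂ (RatFunc.X : F) :=
      (isAlgebraic_algebraMap_iff (algebraMap F L).injective).mp hti
    have h2 : Transcendental ℂ (RatFunc.X : F) := by
      rw [← RatFunc.algebraMap_X]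
      exact (transcendental_algebraMap_iff
        (IsFractionRing.injective ℂ[X] F)).mpr (Polynomial.transcendental_X ℂ)
    exact h2 h1
  -- the embedding φ : ℂ(Y) → L, Y ↦ u
  have haeval_inj : Function.Injective (Polynomial.aeval u : ℂ[X] →ₐ[ℂ] L) :=
    transcendental_iff_injective.mp htrans
  have hφ0 : ℂ[X]⁰ ≤ (cubicS3.SplittingField)⁰.comap (Polynomial.aeval u : ℂ[X] →ₐ[ℂ] L) := by
    intro p hp
    rw [Submonoid.mem_comap]
    rw [mem_nonZeroDivisors_iff_ne_zero] at hp ⊢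
    intro h0
    exact hp (haeval_inj (by simpa using h0))
  set φ : RatFunc ℂ →ₐ[ℂ] L := RatFunc.liftAlgHom (Polynomial.aeval u) hφ0 with hφdef
  have hφp : ∀ p : ℂ[X], φ (algebraMap ℂ[X] F p) = Polynomial.aeval u p := by
    intro p
    have := RatFunc.liftAlgHom_apply_div (φ := Polynomial.aeval u) (hφ := hφ0) p 1
    simpa using this
  have hφX : φ RatFunc.X = u := by
    rw [← RatFunc.algebraMap_X, hφp, aeval_X]
  have hφinj : Function.Injective φ := φ.toRingHom.injective
  -- t is in the range of φ
  have hτ : φ (-(RatFunc.X ^ 3 + 1) / RatFunc.X ^ 2) = t := by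
    rw [map_div₀, map_neg, map_add, map_pow, map_one, hφX]
    have hX2 : φ (RatFunc.X ^ 2) = u ^ 2 := by rw [map_pow, hφX]
    rw [hX2]
    rw [div_eq_iff (pow_ne_zero 2 hu0)]
    linear_combination -hu'
  have htmem : t ∈ φ.fieldRange := ⟨_, hτ⟩
  -- image of F in L is inside range of φ
  have hEq : ((algebraMap F L).comp (algebraMap ℂ[X] F))
      = (Polynomial.aeval t : ℂ[X] →ₐ[ℂ] L).toRingHom := by
    apply Polynomial.ringHom_ext
    · intro a
      simp only [RingHom.comp_apply, RatFunc.algebraMap_C, AlgHom.toRingHom_eq_coe,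
        RingHom.coe_coe, aeval_C]
      rw [← RatFunc.algebraMap_eq_C, ← IsScalarTower.algebraMap_apply]
    · simp [RatFunc.algebraMap_X, ht]
  have hA : ∀ p : ℂ[X], algebraMap F L (algebraMap ℂ[X] F p) ∈ φ.fieldRange := by
    intro p
    have key : algebraMap F L (algebraMap ℂ[X] F p) = Polynomial.aeval t p :=
      RingHom.congr_fun hEq p
    rw [key]
    have hmem : Polynomial.aeval t p ∈ Algebra.adjoin ℂ ({t} : Set L) :=
      Polynomial.aeval_mem_adjoin_singleton ℂ t
    have hle : Algebra.adjoin ℂ ({t} : Set L) ≤ φ.fieldRange.toSubalgebra :=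
      Algebra.adjoin_le (by simpa using htmem)
    exact hle hmem
  have hFle : ∀ f : F, algebraMap F L f ∈ φ.fieldRange.toSubfield := by
    intro f
    rw [← RatFunc.num_div_denom f, map_div₀]
    exact Subfield.div_mem _ (hA f.num) (hA f.denom)
  set M : IntermediateField F L := Subfield.toIntermediateField φ.fieldRange.toSubfield hFle
    with hM
  have huM : u ∈ M := by
    show u ∈ φ.fieldRange.toSubfield
    exact ⟨RatFunc.X, hφX⟩
  -- the key fact : v ∉ M
  have hvM : v ∉ M := by
    rintro ⟨x, hx : φ x = v⟩
    -- quadratic relation for v over u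
    have hq : v ^ 2 + u * v + u ^ 2 + t * v + t * u = 0 := by
      have hfac : (v - u) * (v ^ 2 + u * v + u ^ 2 + t * v + t * u) = 0 := by
        linear_combination hv' - hu'
      rcases mul_eq_zero.mp hfac with h | h
      · exact absurd (sub_eq_zero.mp h) hvu
      · exact h
    -- pull back along φ
    have hqF : RatFunc.X ^ 2 * x ^ 2 - x - RatFunc.X = 0 := by
      apply hφinj
      rw [map_zero, map_sub, map_sub, map_mul, map_pow, map_pow, hφX, hx]
      have ht' : t * u ^ 2 = -(u ^ 3 + 1) := by linear_combination hu'
      -- u² * (quadratic relation) = 0, substituting t*u² = -(u³+1)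
      have : u ^ 2 * (v ^ 2 + u * v + u ^ 2 + t * v + t * u) = 0 := by rw [hq, mul_zero]
      linear_combination this - (v + u) * ht'
    -- substitute s = X² x
    have := noRootQuad (RatFunc.X ^ 2 * x)
    apply this
    linear_combination (RatFunc.X^2) * hqF
  -- now compute the degree
  have hint : IsIntegral F u := IsIntegral.of_finite F u
  have hmin : minpoly F u = cubicS3 :=
    (minpoly.eq_of_irreducible_of_monic cubicS3_irred hu cubicS3_monic).symm
  have h3 : Module.finrank F F⟮u⟯ = 3 := by
    rw [IntermediateField.adjoin.finrank hint, hmin, cubicS3_natDegree]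
  have hdvd : (3 : ℕ) ∣ Module.finrank F L := by
    rw [← h3]
    exact ⟨Module.finrank F⟮u⟯ L, (Module.finrank_mul_finrank F F⟮u⟯ L).symm⟩
  have hcardG : Fintype.card (L ≃ₐ[F] L) = Module.finrank F L :=
    Nat.card_eq_fintype_card.symm.trans (IsGalois.card_aut_eq_finrank F L)
  have hle6 : Module.finrank F L ≤ 6 := by
    rw [← hcardG]
    calc Fintype.card (L ≃ₐ[F] L) ≤ Fintype.card (Equiv.Perm (cubicS3.rootSet L)) :=
          Fintype.card_le_of_injective _ (Polynomial.Gal.galActionHom_injective cubicS3 L)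
      _ = 6 := by rw [Fintype.card_perm, hcard3]; rfl
  have hne3 : Module.finrank F L ≠ 3 := by
    intro h
    apply hvM
    have htop : F⟮u⟯ = ⊤ := by
      apply IntermediateField.eq_of_le_of_finrank_eq le_top
      rw [h3, IntermediateField.topEquiv.toLinearEquiv.finrank_eq, h]
    have hvadj : v ∈ F⟮u⟯ := by rw [htop]; trivial
    have hle : F⟮u⟯ ≤ M := by
      rw [IntermediateField.adjoin_le_iff]
      simpa using huM
    exact hle hvadj
  have h6 : Module.finrank F L = 6 := by
    obtain ⟨m, hm⟩ := hdvd
    have hpos : 0 < Module.finrank F L := Module.finrank_pos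
    rw [hm] at hle6 hne3 hpos ⊢
    omega
  -- build the MulEquiv
  have hbij : Function.Bijective (Polynomial.Gal.galActionHom cubicS3 L) := by
    rw [Fintype.bijective_iff_injective_and_card]
    refine ⟨Polynomial.Gal.galActionHom_injective cubicS3 L, ?_⟩
    have hcards : Fintype.card cubicS3.Gal = Fintype.card (L ≃ₐ[F] L) :=
      Fintype.card_congr (Equiv.refl _)
    rw [hcards, hcardG, h6, Fintype.card_perm, hcard3]
    rfl
  exact ⟨(MulEquiv.ofBijective _ hbij).trans
    (permMulEquiv (Fintype.equivFinOfCardEq hcard3))⟩
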